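/- Let N ≥ 2 be a natural number, and suppose given real numbers r(i) ∈ (0, π/2), ℓ(i) ∈ [π/2, π), and α(i) ∈ [0, π] for i ∈ ℤ/Nℤ, satisfying the spherical law of cosines relations cos ℓ(i) = cos r(i) · cos r(i+1) + sin r(i) · sin r(i+1) · cos α(i) for all i, together with ∑_i α(i) = 2π. Then N ≤ 3. -/
import Mathlib


open Real

/-- A convex spherical polygon with all side lengths in [π/2, π), stellated
from an interior point of the containing hemisphere, is a triangle: if
r(i) ∈ (0, π/2), ℓ(i) ∈ [π/2, π), α(i) ∈ [0, π] satisfy the spherical law of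
cosines cos ℓ(i) = cos r(i) cos r(i+1) + sin r(i) sin r(i+1) cos α(i) and
∑ α(i) = 2π, then N ≤ 3. -/
theorem spherical_polygon_is_triangle (N : ℕ) [NeZero N] (hN : 2 ≤ N)
    (r ℓ α : ZMod N → ℝ)
    (hr : ∀ i, r i ∈ Set.Ioo (0 : ℝ) (π / 2))
    (hℓ : ∀ i, ℓ i ∈ Set.Ico (π / 2) π)
    (hα : ∀ i, α i ∈ Set.Icc (0 : ℝ) π)
    (hlaw : ∀ i, cos (ℓ i) = cos (r i) * cos (r (i + 1)) +
      sin (r i) * sin (r (i + 1)) * cos (α i))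
    (hsum : ∑ i : ZMod N, α i = 2 * π) :
    N ≤ 3 := by
  have hπ := Real.pi_pos
  -- each α i > π/2
  have hbig : ∀ i : ZMod N, π / 2 < α i := by
    intro i
    have hr1 := hr i
    have hr2 := hr (i + 1)
    have hc1 : 0 < cos (r i) := Real.cos_pos_of_mem_Ioo
      ⟨by linarith [hr1.1], hr1.2⟩
    have hc2 : 0 < cos (r (i + 1)) := Real.cos_pos_of_mem_Ioo
      ⟨by linarith [hr2.1], hr2.2⟩
    have hs1 : 0 < sin (r i) := Real.sin_pos_of_pos_of_lt_pi hr1.1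
      (by linarith [hr1.2])
    have hs2 : 0 < sin (r (i + 1)) := Real.sin_pos_of_pos_of_lt_pi hr2.1
      (by linarith [hr2.2])
    have hcl : cos (ℓ i) ≤ 0 := by
      have := (hℓ i).1
      rcases lt_or_eq_of_le this with h | h
      · exact le_of_lt (Real.cos_neg_of_pi_div_two_lt_of_lt h
          (by linarith [(hℓ i).2]))
      · rw [← h, Real.cos_pi_div_two]
    have hca : cos (α i) < 0 := by
      have hlaw' := hlaw i
      nlinarith [mul_pos hc1 hc2, mul_pos hs1 hs2]
    by_contra hle
    push_neg at hle
    have : 0 ≤ cos (α i) := Real.cos_nonneg_of_mem_Icc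
      ⟨by linarith [(hα i).1], hle⟩
    linarith
  have hlt : (N : ℝ) * (π / 2) < 2 * π := by
    calc (N : ℝ) * (π / 2) = ∑ _i : ZMod N, π / 2 := by
          rw [Finset.sum_const, Finset.card_univ, ZMod.card]
          ring
      _ < ∑ i : ZMod N, α i := by
          apply Finset.sum_lt_sum_of_nonempty
          · exact Finset.univ_nonempty
          · intro i _; exact hbig i
      _ = 2 * π := hsum
  have : (N : ℝ) < 4 := by nlinarith
  exact_mod_cast Nat.lt_succ_iff.mp (by exact_mod_cast this : (N : ℕ) < 4)
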